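/- If a compactly supported measure μ on diffeomorphisms of a closed manifold M is expanding on average on k-planes for some k, then for every j ∈ ℕ the j-point motion (the diagonal action on M^j, F(x₁,…,x_j) = (f(x₁),…,f(x_j))) is expanding on average on k-planes restricted to each factor; in particular, if μ is expanding on average, then the k-point motion is expanding on average for all k ∈ ℕ. -/

import Mathlib

open MeasureTheory

/-- Base point after `n` steps of the random composition. -/
def seqPt {G X : Type*} (t : G → X → X) : ∀ n : ℕ, (Fin n → G) → X → X
  | 0, _, x => x
  | n + 1, ω, x => t (ω (Fin.last n)) (seqPt t n (fun j => ω j.castSucc) x)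

/-- The composed derivative cocycle `D f^n_ω` over the base orbit. -/
def seqL {G X V : Type*} [TopologicalSpace V] [AddCommGroup V] [Module ℝ V]
    (t : G → X → X) (A : G → X → (V ≃L[ℝ] V)) : ∀ n : ℕ, (Fin n → G) → X → (V ≃L[ℝ] V)
  | 0, _, _ => ContinuousLinearEquiv.refl ℝ V
  | n + 1, ω, x =>
      (seqL t A n (fun j => ω j.castSucc) x).trans
        (A (ω (Fin.last n)) (seqPt t n (fun j => ω j.castSucc) x))

/-- The factor by which a linear map `L` scales the volume of a subspace `W`,
`√ det ((L|_W)* (L|_W))`, i.e. `‖L|_{vol_W}‖`. -/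
noncomputable def volScale {d : ℕ}
    (L : EuclideanSpace ℝ (Fin d) →L[ℝ] EuclideanSpace ℝ (Fin d))
    (W : Submodule ℝ (EuclideanSpace ℝ (Fin d))) : ℝ :=
  Real.sqrt (LinearMap.det
    (((ContinuousLinearMap.adjoint (L.comp W.subtypeL)).comp (L.comp W.subtypeL)).toLinearMap))

lemma log_max_pos {x y : ℝ} (hx : 0 < x) (hy : 0 < y) :
    Real.log (x ⊔ y) = Real.log x ⊔ Real.log y := by
  rcases le_total x y with h | h
  · rw [sup_eq_right.2 h, sup_eq_right.2 (Real.log_le_log hx h)]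
  · rw [sup_eq_left.2 h, sup_eq_left.2 (Real.log_le_log hy h)]

lemma log_sup' {ι : Type*} (s : Finset ι) (hs : s.Nonempty) (a : ι → ℝ)
    (ha : ∀ i ∈ s, 0 < a i) :
    Real.log (s.sup' hs a) = s.sup' hs fun i => Real.log (a i) := by
  induction hs using Finset.Nonempty.cons_induction with
  | singleton i => simp
  | cons i s hi hs ih =>
    have h1 : 0 < a i := ha i (by simp)
    obtain ⟨j, hj⟩ := hs
    have h2 : 0 < s.sup' ⟨j, hj⟩ a :=
      lt_of_lt_of_le (ha j (by simp [hj])) (Finset.le_sup' a hj)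
    rw [Finset.sup'_cons ⟨j, hj⟩, Finset.sup'_cons ⟨j, hj⟩, log_max_pos h1 h2,
      ih (fun j hj => ha j (by simp [hj]))]

lemma int_sup' {Ω ι : Type*} [MeasurableSpace Ω] {ν : Measure Ω}
    (s : Finset ι) (hs : s.Nonempty) (f : ι → Ω → ℝ)
    (hf : ∀ i ∈ s, Integrable (f i) ν) :
    Integrable (fun ω => s.sup' hs fun i => f i ω) ν := by
  induction hs using Finset.Nonempty.cons_induction with
  | singleton i => simpa using hf i (by simp)
  | cons i s hi hs ih =>
    simp only [Finset.sup'_cons hs]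
    exact (hf i (by simp)).sup (ih (fun j hj => hf j (by simp [hj])))

/-- If a compactly supported measure `μ` on diffeomorphisms of a closed
manifold `M` (modelled by a derivative cocycle `A` over a base action `t`) is expanding on
average on `k`-planes, then for every `j` the `j`-point motion (the diagonal action on `M^j`,
with the sup metric on the product tangent spaces) is expanding on average on `k`-planes
restricted to each factor; in particular if `μ` is expanding on average, then for every `j`
the `j`-point motion is expanding on average. -/
theorem stmt9 {G M : Type*} [MeasurableSpace G] (d k : ℕ)
    (μ : Measure G) [IsProbabilityMeasure μ]
    (t : G → M → M)
    (A : G → M → (EuclideanSpace ℝ (Fin d) ≃L[ℝ] EuclideanSpace ℝ (Fin d)))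
    (hk : ∃ (N : ℕ) (lam : ℝ), 0 < N ∧ 0 < lam ∧
      ∀ (x : M) (W : Submodule ℝ (EuclideanSpace ℝ (Fin d))), Module.finrank ℝ W = k →
        lam ≤ ∫ ω, Real.log (volScale
            ((seqL t A N ω x : EuclideanSpace ℝ (Fin d) →L[ℝ] EuclideanSpace ℝ (Fin d))) W)
          ∂(Measure.pi fun _ : Fin N => μ)) :
    (∀ j : ℕ, ∃ (N : ℕ) (lam : ℝ), 0 < N ∧ 0 < lam ∧
      ∀ (x : Fin (j + 1) → M) (i : Fin (j + 1))
        (W : Submodule ℝ (EuclideanSpace ℝ (Fin d))), Module.finrank ℝ W = k →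
        lam ≤ ∫ ω, Real.log (volScale
            ((seqL t A N ω (x i) :
              EuclideanSpace ℝ (Fin d) →L[ℝ] EuclideanSpace ℝ (Fin d))) W)
          ∂(Measure.pi fun _ : Fin N => μ)) ∧
    ((∃ (N : ℕ) (lam : ℝ), 0 < N ∧ 0 < lam ∧
        ∀ (x : M) (v : EuclideanSpace ℝ (Fin d)), ‖v‖ = 1 →
          lam ≤ ∫ ω, Real.log ‖(seqL t A N ω x) v‖ ∂(Measure.pi fun _ : Fin N => μ)) →
      ∀ j : ℕ, ∃ (N : ℕ) (lam : ℝ), 0 < N ∧ 0 < lam ∧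
        ∀ (x : Fin (j + 1) → M) (v : Fin (j + 1) → EuclideanSpace ℝ (Fin d)),
          (∀ i, ‖v i‖ ≤ 1) → (∃ i, ‖v i‖ = 1) →
          lam ≤ ∫ ω, Real.log
              (Finset.univ.sup' Finset.univ_nonempty
                fun i : Fin (j + 1) => ‖(seqL t A N ω (x i)) (v i)‖)
            ∂(Measure.pi fun _ : Fin N => μ)) := by
  classical
  constructor
  · intro j
    obtain ⟨N, lam, hN, hlam, h⟩ := hk
    exact ⟨N, lam, hN, hlam, fun x i W hW => h (x i) W hW⟩
  · rintro ⟨N, lam, hN, hlam, h⟩ j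
    refine ⟨N, lam, hN, hlam, ?_⟩
    rintro x v hle ⟨i₀, hi₀⟩
    set ν : Measure (Fin N → G) := Measure.pi fun _ : Fin N => μ with hν
    set f : Fin (j + 1) → (Fin N → G) → ℝ :=
      fun i ω => Real.log ‖(seqL t A N ω (x i)) (v i)‖ with hf
    have hv₀ : v i₀ ≠ 0 := by
      intro h0; rw [h0, norm_zero] at hi₀; norm_num at hi₀
    have hu : ∀ i, v i ≠ 0 → Integrable (f i) ν := by
      intro i hv
      have hnvz : ‖v i‖ ≠ 0 := norm_ne_zero_iff.2 hv
      set u : EuclideanSpace ℝ (Fin d) := ‖v i‖⁻¹ • v i with hud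
      have hnu : ‖u‖ = 1 := by
        rw [hud, norm_smul, norm_inv, norm_norm, inv_mul_cancel₀ hnvz]
      have huz : u ≠ 0 := by
        intro h0; rw [h0, norm_zero] at hnu; norm_num at hnu
      have h1 := h (x i) u hnu
      have hint : Integrable (fun ω => Real.log ‖(seqL t A N ω (x i)) u‖) ν := by
        by_contra hc
        rw [integral_undef hc] at h1
        linarith
      have heq : f i = fun ω =>
          Real.log ‖v i‖ + Real.log ‖(seqL t A N ω (x i)) u‖ := by
        funext ω
        have hvu : v i = ‖v i‖ • u := by
          rw [hud, smul_smul, mul_inv_cancel₀ hnvz, one_smul]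
        have hLz : (seqL t A N ω (x i)) u ≠ 0 := by
          intro h0
          exact huz (by simpa using congrArg (seqL t A N ω (x i)).symm h0)
        have hrw : ‖(seqL t A N ω (x i)) (v i)‖ = ‖v i‖ * ‖(seqL t A N ω (x i)) u‖ := by
          conv_lhs => rw [hvu]
          rw [_root_.map_smul, norm_smul, norm_norm]
        rw [hf]
        simp only
        rw [hrw, Real.log_mul hnvz (norm_ne_zero_iff.2 hLz)]
      rw [heq]
      exact (integrable_const _).add hint
    set S : Finset (Fin (j + 1)) := Finset.univ.filter fun i => v i ≠ 0 with hSdef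
    have hi₀S : i₀ ∈ S := by simp [hSdef, hv₀]
    have hS : S.Nonempty := ⟨i₀, hi₀S⟩
    have hpos : ∀ ω : Fin N → G, ∀ i ∈ S, 0 < ‖(seqL t A N ω (x i)) (v i)‖ := by
      intro ω i hi
      have hvne : v i ≠ 0 := (Finset.mem_filter.1 hi).2
      refine norm_pos_iff.2 fun h0 => hvne ?_
      simpa using congrArg (seqL t A N ω (x i)).symm h0
    have hsup : ∀ ω : Fin N → G,
        (Finset.univ.sup' Finset.univ_nonempty
          fun i : Fin (j + 1) => ‖(seqL t A N ω (x i)) (v i)‖)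
        = S.sup' hS fun i => ‖(seqL t A N ω (x i)) (v i)‖ := by
      intro ω
      apply le_antisymm
      · apply Finset.sup'_le
        intro i _
        by_cases hvz : v i = 0
        · rw [hvz]
          simp only [map_zero, norm_zero]
          exact Finset.le_sup'_of_le _ hi₀S (le_of_lt (hpos ω i₀ hi₀S))
        · exact Finset.le_sup' (fun i => ‖(seqL t A N ω (x i)) (v i)‖)
            (by simp [hSdef, hvz])
      · exact Finset.sup'_le _ _ fun i _ =>
          Finset.le_sup' (fun i => ‖(seqL t A N ω (x i)) (v i)‖) (Finset.mem_univ i)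
    have key : ∀ ω : Fin N → G,
        Real.log (Finset.univ.sup' Finset.univ_nonempty
          fun i : Fin (j + 1) => ‖(seqL t A N ω (x i)) (v i)‖)
        = S.sup' hS fun i => f i ω := by
      intro ω
      rw [hsup ω, log_sup' S hS _ (fun i hi => hpos ω i hi)]
    have hint₀ : Integrable (f i₀) ν := hu i₀ hv₀
    have hintS : Integrable (fun ω => S.sup' hS fun i => f i ω) ν :=
      int_sup' S hS f fun i hi => hu i (Finset.mem_filter.1 hi).2
    calc lam ≤ ∫ ω, f i₀ ω ∂ν := h (x i₀) (v i₀) hi₀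
      _ ≤ ∫ ω, S.sup' hS (fun i => f i ω) ∂ν :=
          integral_mono hint₀ hintS fun ω => Finset.le_sup' (fun i => f i ω) hi₀S
      _ = _ := integral_congr_ae (ae_of_all _ fun ω => (key ω).symm)
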